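/- Let Ω ⊆ ℝ^N have finite positive measure, let u ∈ L^∞(Ω) with ‖u‖_∞ = 1, and let (p_n) satisfy p_n⁻ → ∞ and p_n⁺ ≤ β p_n⁻ for some β > 1. Then lim_{n→∞} (∫_Ω |u(x)|^{p_n(x)} dx)^{1/p_n⁺} = 1 and lim_{n→∞} (∫_Ω |u(x)|^{p_n(x)} dx)^{1/p_n⁻} = 1. -/

import Mathlib

open MeasureTheory Filter

set_option maxHeartbeats 1000000

private lemma squeeze_one (f g : ℕ → ℝ) (hg : Tendsto g atTop (nhds 1))
    (hfg : ∀ᶠ n in atTop, f n ≤ g n)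
    (hlow : ∀ ε : ℝ, 0 < ε → ∀ᶠ n in atTop, 1 - ε ≤ f n) :
    Tendsto f atTop (nhds 1) := by
  rw [tendsto_order]
  constructor
  · intro a ha
    filter_upwards [hlow ((1 - a)/2) (by linarith)] with n hn
    linarith
  · intro a ha
    filter_upwards [hfg, hg.eventually_lt_const ha] with n h h'
    linarith

theorem stmt6 {N : ℕ} (Ω : Set (Fin N → ℝ)) (hΩm : MeasurableSet Ω)
    (hΩpos : 0 < volume Ω) (hΩfin : volume Ω < ⊤)
    (p : ℕ → (Fin N → ℝ) → ℝ) (hpmeas : ∀ n, Measurable (p n))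
    (hp1 : ∀ n, ∀ᵐ x ∂(volume.restrict Ω), 1 < p n x)
    (hpB : ∀ n, ∃ B : ℝ, ∀ᵐ x ∂(volume.restrict Ω), p n x ≤ B)
    (β : ℝ) (hβ : 1 < β)
    (hpβ : ∀ n, essSup (p n) (volume.restrict Ω) ≤ β * essInf (p n) (volume.restrict Ω))
    (hdiv : Tendsto (fun n => essInf (p n) (volume.restrict Ω)) atTop atTop)
    (u : (Fin N → ℝ) → ℝ) (hu : Measurable u)
    (huB : MemLp u ⊤ (volume.restrict Ω))
    (hnorm : essSup (fun x => |u x|) (volume.restrict Ω) = 1) :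
    Tendsto (fun n => (∫ x in Ω, |u x| ^ p n x) ^ (1 / essSup (p n) (volume.restrict Ω)))
        atTop (nhds 1) ∧
    Tendsto (fun n => (∫ x in Ω, |u x| ^ p n x) ^ (1 / essInf (p n) (volume.restrict Ω)))
        atTop (nhds 1) := by
  set μ := volume.restrict Ω with hμdef
  haveI : IsFiniteMeasure μ := ⟨by rwa [Measure.restrict_apply_univ]⟩
  have hμuniv : μ Set.univ = volume Ω := Measure.restrict_apply_univ Ω
  have hμne : μ ≠ 0 := by
    intro h
    rw [h] at hμuniv
    simp at hμuniv
    exact hΩpos.ne' hμuniv.symm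
  haveI : (ae μ).NeBot := ae_neBot.mpr hμne
  -- boundedness of |u|
  have hub : IsBoundedUnder (· ≤ ·) (ae μ) fun x => |u x| := by
    have h1 : eLpNormEssSup u μ < ⊤ := by
      have := huB.2
      rwa [eLpNorm_exponent_top] at this
    obtain ⟨C, hC⟩ := eLpNormEssSup_lt_top_iff_isBoundedUnder.mp h1
    have h3 : ∀ᶠ x in ae μ, |u x| ≤ (C : ℝ) := by
      filter_upwards [hC] with x hx
      have h2 : (‖u x‖₊ : ℝ) ≤ (C : ℝ) := NNReal.coe_le_coe.mpr hx
      rwa [coe_nnnorm, Real.norm_eq_abs] at h2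
    exact ⟨(C : ℝ), eventually_map.mpr h3⟩
  have hle : ∀ᵐ x ∂μ, |u x| ≤ 1 := by
    have := ae_le_essSup (f := fun x => |u x|) (μ := μ) hub
    rwa [hnorm] at this
  -- positivity of superlevel sets
  have hm : ∀ a : ℝ, a < 1 → 0 < μ {x | a < |u x|} := by
    intro a ha
    by_contra h
    push_neg at h
    have h0 : μ {x | a < |u x|} = 0 := le_antisymm h zero_le
    have hae : ∀ᵐ x ∂μ, |u x| ≤ a := by
      rw [ae_iff]
      simpa [not_le] using h0
    have hcob : IsCoboundedUnder (· ≤ ·) (ae μ) fun x => |u x| :=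
      isCoboundedUnder_le_of_eventually_le (ae μ) (x := 0)
        (Eventually.of_forall fun x => abs_nonneg _)
    have : essSup (fun x => |u x|) μ ≤ a := limsup_le_of_le hcob hae
    rw [hnorm] at this
    linarith
  set S := fun n => essSup (p n) μ with hSdef
  set s := fun n => essInf (p n) μ with hsdef
  have hbd : ∀ n, IsBoundedUnder (· ≤ ·) (ae μ) (p n) := fun n => (hpB n).imp fun B hB => hB
  have hbd' : ∀ n, IsBoundedUnder (· ≥ ·) (ae μ) (p n) :=
    fun n => ⟨1, (hp1 n).mono fun x hx => hx.le⟩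
  have hpS : ∀ n, ∀ᵐ x ∂μ, p n x ≤ S n := fun n => ae_le_essSup (hbd n)
  have hsS : ∀ n, s n ≤ S n := fun n => liminf_le_limsup (hbd n) (hbd' n)
  have hSdiv : Tendsto S atTop atTop := tendsto_atTop_mono hsS hdiv
  have hs1 : ∀ᶠ n in atTop, 1 ≤ s n := hdiv.eventually_ge_atTop 1
  -- integrand facts
  have hfmeas : ∀ n, Measurable fun x => |u x| ^ p n x := fun n => hu.abs.pow (hpmeas n)
  have hf0 : ∀ n x, 0 ≤ |u x| ^ p n x := fun n x => Real.rpow_nonneg (abs_nonneg _) _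
  have hf1 : ∀ n, ∀ᵐ x ∂μ, |u x| ^ p n x ≤ 1 := by
    intro n
    filter_upwards [hle, hp1 n] with x hx hp
    exact Real.rpow_le_one (abs_nonneg _) hx (by linarith)
  have hInt : ∀ n, Integrable (fun x => |u x| ^ p n x) μ := by
    intro n
    refine Integrable.mono' (integrable_const 1) (hfmeas n).aestronglyMeasurable ?_
    filter_upwards [hf1 n] with x hx
    rw [Real.norm_eq_abs, abs_of_nonneg (hf0 n x)]
    exact hx
  set I := fun n => ∫ x, |u x| ^ p n x ∂μ with hIdef
  set V := (volume Ω).toReal with hVdef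
  have hV : 0 < V := ENNReal.toReal_pos hΩpos.ne' hΩfin.ne
  have hI0 : ∀ n, 0 ≤ I n := fun n => integral_nonneg (hf0 n)
  have hIV : ∀ n, I n ≤ V := by
    intro n
    have := integral_mono_ae (hInt n) (integrable_const 1) (hf1 n)
    rwa [integral_const, measureReal_def, hμuniv, smul_eq_mul, mul_one] at this
  -- lower bound for the modular
  have hlowI : ∀ (a : ℝ), 0 < a → a < 1 → ∀ n,
      a ^ S n * (μ {x | a < |u x|}).toReal ≤ I n := by
    intro a ha0 ha1 n
    set A := {x | a < |u x|} with hAdef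
    have hAm : MeasurableSet A := measurableSet_lt measurable_const hu.abs
    have h1 : ∫ x in A, (a ^ S n : ℝ) ∂μ ≤ ∫ x in A, |u x| ^ p n x ∂μ := by
      refine setIntegral_mono_on_ae ((integrable_const _).integrableOn)
        ((hInt n).integrableOn) hAm ?_
      filter_upwards [hpS n, hp1 n] with x hx hp hxA
      calc a ^ S n ≤ a ^ p n x :=
            Real.rpow_le_rpow_of_exponent_ge ha0 ha1.le hx
        _ ≤ |u x| ^ p n x := Real.rpow_le_rpow ha0.le (le_of_lt hxA) (by linarith)
    have h2 : ∫ x in A, |u x| ^ p n x ∂μ ≤ I n :=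
      setIntegral_le_integral (hInt n) (Eventually.of_forall (hf0 n))
    rw [setIntegral_const, smul_eq_mul, mul_comm] at h1
    exact le_trans h1 h2
  -- generic convergence of m ^ (1/q n) → 1 for m > 0 and q → ∞
  have haux : ∀ (m : ℝ), 0 < m → ∀ (q : ℕ → ℝ), Tendsto q atTop atTop →
      Tendsto (fun n => m ^ (1 / q n)) atTop (nhds 1) := by
    intro m hm0 q hq
    have h0 : Tendsto (fun n => 1 / q n) atTop (nhds 0) := tendsto_const_nhds.div_atTop hq
    have := (Real.continuousAt_const_rpow (b := (0:ℝ)) hm0.ne').tendsto.comp h0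
    simpa [Function.comp_def, Real.rpow_zero] using this
  -- main generic lemma
  have main : ∀ (q : ℕ → ℝ), Tendsto q atTop atTop → (∀ᶠ n in atTop, S n ≤ β * q n) →
      (∀ᶠ n in atTop, q n ≤ S n) →
      Tendsto (fun n => I n ^ (1 / q n)) atTop (nhds 1) := by
    intro q hq hqβ hqS
    refine squeeze_one _ (fun n => V ^ (1 / q n)) (haux V hV q hq) ?_ ?_
    · filter_upwards [hq.eventually_ge_atTop 1] with n hn
      exact Real.rpow_le_rpow (hI0 n) (hIV n) (by positivity)
    · intro ε hε
      set δ := min ε 1 with hδdef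
      have hδ0 : 0 < δ := lt_min hε one_pos
      have hδ1 : δ ≤ 1 := min_le_right _ _
      set c := 1 - δ / 2 with hcdef
      have hc0 : 0 < c := by simp only [hcdef]; linarith
      have hc1 : c < 1 := by simp only [hcdef]; linarith
      set a := c ^ (1 / β) with hadef
      have ha0 : 0 < a := Real.rpow_pos_of_pos hc0 _
      have ha1 : a < 1 := Real.rpow_lt_one hc0.le hc1 (by positivity)
      set m := (μ {x | a < |u x|}).toReal with hmdef
      have hm0 : 0 < m := ENNReal.toReal_pos (hm a ha1).ne' (measure_ne_top μ _)
      have hkey : Tendsto (fun n => c * m ^ (1 / q n)) atTop (nhds c) := by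
        simpa using tendsto_const_nhds.mul (haux m hm0 q hq)
      have hclt : 1 - ε < c := by
        have : δ ≤ ε := min_le_left _ _
        simp only [hcdef]; linarith
      filter_upwards [hkey.eventually_const_lt hclt, hq.eventually_ge_atTop 1, hqS, hqβ]
        with n h1 h2 h3 h4
      have hq0 : 0 < q n := lt_of_lt_of_le one_pos h2
      have hS0 : 0 < S n := lt_of_lt_of_le hq0 h3
      have hlow := hlowI a ha0 ha1 n
      have hstep : (a ^ S n * m) ^ (1 / q n) ≤ I n ^ (1 / q n) :=
        Real.rpow_le_rpow (by positivity) hlow (by positivity)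
      have heq : (a ^ S n * m) ^ (1 / q n) = a ^ (S n / q n) * m ^ (1 / q n) := by
        rw [Real.mul_rpow (by positivity) hm0.le, ← Real.rpow_mul ha0.le, mul_one_div]
      have hexp : a ^ (S n / q n) ≥ a ^ β := by
        refine Real.rpow_le_rpow_of_exponent_ge ha0 ha1.le ?_
        rw [div_le_iff₀ hq0]
        exact h4
      have haβ : a ^ β = c := by
        rw [hadef, ← Real.rpow_mul hc0.le, one_div_mul_cancel (by positivity : β ≠ 0),
          Real.rpow_one]
      have : c * m ^ (1 / q n) ≤ I n ^ (1 / q n) := by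
        rw [← haβ]
        calc a ^ β * m ^ (1 / q n) ≤ a ^ (S n / q n) * m ^ (1 / q n) := by
              have hmq : (0:ℝ) ≤ m ^ (1 / q n) := Real.rpow_nonneg hm0.le _
              exact mul_le_mul_of_nonneg_right hexp hmq
          _ = (a ^ S n * m) ^ (1 / q n) := heq.symm
          _ ≤ I n ^ (1 / q n) := hstep
      linarith
  constructor
  · refine main S hSdiv ?_ (Eventually.of_forall fun n => le_refl _)
    filter_upwards [hs1] with n hn
    have hS1 : 1 ≤ S n := le_trans hn (hsS n)
    nlinarith
  · exact main s hdiv (Eventually.of_forall fun n => hpβ n) (hs1.mono fun n hn => hsS n)
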